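/- Under the stated hypotheses, for any γ_a ≥ 0 and γ_b ≥ 0, the A-norm of the solution difference satisfies (x_{γ_a} − x_{γ_b})ᵀ A (x_{γ_a} − x_{γ_b}) = Σ_{j=1}^{N} ( (γ_b − γ_a) μ_j / ((1 + γ_b μ_j)(1 + γ_a μ_j)) )² d̃_j². -/

import Mathlib

open Matrix

/-- The squared A-norm of the difference of two shifted solutions equals the sum of
the squared coefficient differences: (x_{γ_a}−x_{γ_b})ᵀ A (x_{γ_a}−x_{γ_b})
= Σ_j ((γ_b−γ_a)μ_j/((1+γ_b μ_j)(1+γ_a μ_j)))² d̃_j². -/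
theorem stmt_6 (N : ℕ) (hN : 0 < N) (A E V : Matrix (Fin N) (Fin N) ℝ) (μ : Fin N → ℝ)
    (hA : A.PosDef) (hE : E.PosSemidef) (hμ : ∀ j, 0 ≤ μ j)
    (hV : IsUnit V) (hAV : Vᵀ * A * V = 1) (hEV : Vᵀ * E * V = Matrix.diagonal μ)
    (b : Fin N → ℝ) (γa γb : ℝ) (hγa : 0 ≤ γa) (hγb : 0 ≤ γb) :
    ((∑ j : Fin N, (((Vᵀ *ᵥ b) j) / (1 + γa * μ j)) • (fun i => V i j))
        - (∑ j : Fin N, (((Vᵀ *ᵥ b) j) / (1 + γb * μ j)) • (fun i => V i j))) ⬝ᵥ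
      (A *ᵥ ((∑ j : Fin N, (((Vᵀ *ᵥ b) j) / (1 + γa * μ j)) • (fun i => V i j))
        - (∑ j : Fin N, (((Vᵀ *ᵥ b) j) / (1 + γb * μ j)) • (fun i => V i j))))
    = ∑ j : Fin N,
        ((γb - γa) * μ j / ((1 + γb * μ j) * (1 + γa * μ j))) ^ 2 * ((Vᵀ *ᵥ b) j) ^ 2 := by
  set d := Vᵀ *ᵥ b with hd
  set c : Fin N → ℝ := fun j => d j / (1 + γa * μ j) - d j / (1 + γb * μ j) with hc
  have ha : ∀ j, (1 : ℝ) + γa * μ j ≠ 0 := fun j => by have := hμ j; positivity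
  have hb : ∀ j, (1 : ℝ) + γb * μ j ≠ 0 := fun j => by have := hμ j; positivity
  have hx : ((∑ j : Fin N, (d j / (1 + γa * μ j)) • (fun i => V i j))
        - (∑ j : Fin N, (d j / (1 + γb * μ j)) • (fun i => V i j))) = V *ᵥ c := by
    funext i
    simp only [Pi.sub_apply, Finset.sum_apply, Pi.smul_apply, smul_eq_mul, mulVec, dotProduct,
      hc]
    rw [← Finset.sum_sub_distrib]
    exact Finset.sum_congr rfl fun j _ => by ring
  rw [hx]
  have key : (V *ᵥ c) ⬝ᵥ (A *ᵥ (V *ᵥ c)) = c ⬝ᵥ c := by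
    calc (V *ᵥ c) ⬝ᵥ (A *ᵥ (V *ᵥ c)) = c ⬝ᵥ ((Vᵀ * A * V) *ᵥ c) := by
          rw [dotProduct_mulVec, vecMul_mulVec, ← dotProduct_mulVec, mulVec_mulVec,
            Matrix.mul_assoc]
      _ = c ⬝ᵥ c := by rw [hAV, one_mulVec]
  rw [key]
  unfold dotProduct
  refine Finset.sum_congr rfl fun j _ => ?_
  have : c j = (γb - γa) * μ j / ((1 + γb * μ j) * (1 + γa * μ j)) * d j := by
    have ha' := ha j
    have hb' := hb j
    rw [hc]
    dsimp only
    rw [div_sub_div _ _ ha' hb', div_mul_eq_mul_div]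
    congr 1 <;> ring
  rw [this]; ring
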